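/- Every DP state (k,S) that is reachable from the initial state (0,∅) by iterating the DP transitions and that satisfies S ⊊ I has S ∈ Δ. -/
import Mathlib


/-- Items are `Fin m`; a ranking is a bijection `Fin m ≃ Fin m`
(`rk i` is the rank of item `i`; lower rank = more preferred).
`IsBest rk S b` says that `b` is the item of `I ∖ S` with minimum rank,
i.e. `b = b(a, S)` for an agent with ranking `rk`. -/
def IsBest {m : ℕ} (rk : Fin m ≃ Fin m) (S : Finset (Fin m)) (b : Fin m) : Prop :=
  b ∉ S ∧ ∀ j ∉ S, rk b ≤ rk j

/-- `D rk i` : the set of items strictly preferred to `i` under the ranking `rk`. -/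
def D {m : ℕ} (rk : Fin m ≃ Fin m) (i : Fin m) : Finset (Fin m) :=
  Finset.univ.filter fun j => rk j < rk i

/-- `Δ` : the family of proper subsets `S ⊊ I` with `⋃_{a ≠ a₁} D(a, b(a,S)) = S`. -/
def Delta {A : Type*} {m : ℕ} (a₁ : A) (rk : A → Fin m ≃ Fin m) :
    Set (Finset (Fin m)) :=
  {S | S ⊂ Finset.univ ∧ ∀ b : A → Fin m, (∀ a, IsBest (rk a) S (b a)) →
    {j : Fin m | ∃ a, a ≠ a₁ ∧ j ∈ D (rk a) (b a)} = ↑S}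

/-- The DP transition relation on states `(k, S)`.  The picking sequence `π`
is 0-indexed (`π t` is the picker of time step `t + 1`), so the next picker
from state `(k, S)` is `π (|S| + k)`.  If the next picker is the manipulator
`a₁`, the unique successor is `(k + 1, S)`; otherwise, with `b = b(a, S)` the
best remaining item of the picker `a`, the successors are `(k, S ∪ {b})` and,
when `k ≥ 1`, `(k - 1, S ∪ {b})`. -/
def DPStep {A : Type*} {m : ℕ} (π : ℕ → A) (rk : A → Fin m ≃ Fin m) (a₁ : A)
    (s s' : ℕ × Finset (Fin m)) : Prop :=
  s.2.card + s.1 < m ∧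
    ((π (s.2.card + s.1) = a₁ ∧ s' = (s.1 + 1, s.2)) ∨
      (π (s.2.card + s.1) ≠ a₁ ∧
        ∃ b : Fin m, IsBest (rk (π (s.2.card + s.1))) s.2 b ∧
          (s' = (s.1, insert b s.2) ∨ (1 ≤ s.1 ∧ s' = (s.1 - 1, insert b s.2)))))

/-- every DP state `(k, S)` reachable from the initial state `(0, ∅)`
with `S ⊊ I` has `S ∈ Δ`. -/
theorem statement3 {A : Type*} {m : ℕ} (π : ℕ → A) (a₁ : A)
    (rk : A → Fin m ≃ Fin m) (k : ℕ) (S : Finset (Fin m))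
    (hreach : Relation.ReflTransGen (DPStep π rk a₁) (0, ∅) (k, S))
    (hS : S ⊂ Finset.univ) :
    S ∈ Delta a₁ rk := by
  have main : ∀ s : ℕ × Finset (Fin m),
      Relation.ReflTransGen (DPStep π rk a₁) (0, ∅) s →
      ∀ j ∈ s.2, ∃ a, a ≠ a₁ ∧ ∀ i ∉ s.2, rk a j < rk a i := by
    intro s hs
    induction hs with
    | refl => simp
    | @tail p c _ step ih =>
      obtain ⟨_, hcase⟩ := step
      rcases hcase with ⟨_, rfl⟩ | ⟨hne, b, hbest, hs'⟩
      · exact ih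
      · have hins : ∀ j ∈ insert b p.2, ∃ a, a ≠ a₁ ∧
            ∀ i ∉ insert b p.2, rk a j < rk a i := ?_
        · rcases hs' with rfl | ⟨_, rfl⟩ <;> exact hins
        intro j hj
        rcases Finset.mem_insert.mp hj with rfl | hj
        · refine ⟨_, hne, fun i hi => ?_⟩
          have hib : i ≠ j := fun h => hi (h ▸ Finset.mem_insert_self _ _)
          have hle := hbest.2 i (fun h => hi (Finset.mem_insert_of_mem h))
          exact lt_of_le_of_ne hle (fun h => hib ((rk _).injective h.symm))
        · obtain ⟨a, ha, hlt⟩ := ih j hj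
          exact ⟨a, ha, fun i hi => hlt i (fun h => hi (Finset.mem_insert_of_mem h))⟩
  have key := main (k, S) hreach
  refine ⟨hS, fun b hb => ?_⟩
  ext j
  simp only [Set.mem_setOf_eq, Finset.coe_sort_coe, Finset.mem_coe, D,
    Finset.mem_filter, Finset.mem_univ, true_and]
  constructor
  · rintro ⟨a, ha, hj⟩
    by_contra hjS
    exact absurd ((hb a).2 j hjS) (not_le.mpr hj)
  · intro hjS
    obtain ⟨a, ha, hlt⟩ := key j hjS
    exact ⟨a, ha, hlt (b a) (hb a).1⟩
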